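/- Let X be a standard semilinear set in R^n and define X(0) = X and X(j) = cl(X(j−1)) − X(j−1) for j ≥ 1. Then for every j: cl(X(j)) is the disjoint union of X(j) and X(j+1); X(j) ⊃ X(j+2); X(j) − X(j+2) is the set of inner points of X(j) in cl(X(j)); and X(2j) is standard. -/

import Mathlib

open Set Topology

/-- `Rn R n` is the model of the affine space `R^n`. -/
abbrev Rn (R : Type*) (n : ℕ) : Type _ := Fin n → R

/-- The graph of `f` restricted to `X`, as a subset of `R^(a+b)`. -/
def mapGraph {R : Type*} {a b : ℕ} (f : Rn R a → Rn R b) (X : Set (Rn R a)) :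
    Set (Rn R (a + b)) :=
  {z | ∃ x ∈ X, z = Fin.append x (f x)}

/-- The graph of an `R`-valued function restricted to `X`, as a subset of `R^(a+1)`. -/
def funGraph {R : Type*} {a : ℕ} (f : Rn R a → R) (X : Set (Rn R a)) :
    Set (Rn R (a + 1)) :=
  {z | ∃ x ∈ X, z = Fin.snoc x (f x)}

/-- `f` is a homeomorphism from `X` onto `Y`. -/
def IsHomeoOn {α β : Type*} [TopologicalSpace α] [TopologicalSpace β]
    (f : α → β) (X : Set α) (Y : Set β) : Prop :=
  Set.BijOn f X Y ∧ ContinuousOn f X ∧ ∃ g : β → α, Set.InvOn g f X Y ∧ ContinuousOn g Y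

section LOF

variable {R : Type*} [Field R] [LinearOrder R] [IsStrictOrderedRing R]

/-- Bounded subset of `R^n`. -/
def IsBoundedSet {n : ℕ} (A : Set (Rn R n)) : Prop :=
  ∃ c : R, ∀ x ∈ A, ∀ i, |x i| ≤ c

/-- A basic semilinear set: finitely many affine equalities and strict inequalities. -/
def IsSemilinearBasic {n : ℕ} (A : Set (Rn R n)) : Prop :=
  ∃ l0 l1 : List (Rn R n →ᵃ[R] R),
    A = {x | (∀ f ∈ l0, f x = 0) ∧ (∀ f ∈ l1, 0 < f x)}

/-- A semilinear set: a finite union of basic semilinear sets. -/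
def IsSemilinear {n : ℕ} (A : Set (Rn R n)) : Prop :=
  ∃ l : List (Set (Rn R n)), (∀ B ∈ l, IsSemilinearBasic B) ∧ A = {x | ∃ B ∈ l, x ∈ B}

/-- A cell in `R^n`: a bounded set defined by affine equalities and weak inequalities. -/
def IsCell {n : ℕ} (σ : Set (Rn R n)) : Prop :=
  IsBoundedSet σ ∧ ∃ l0 l1 : List (Rn R n →ᵃ[R] R),
    σ = {x | (∀ f ∈ l0, f x = 0) ∧ (∀ f ∈ l1, 0 ≤ f x)}

/-- `τ` is a (nonempty) face of the cell `σ`. -/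
def IsFaceOf {n : ℕ} (τ σ : Set (Rn R n)) : Prop :=
  IsExtreme R σ τ ∧ IsCell τ ∧ τ.Nonempty

/-- The boundary `∂σ` of a cell: union of its proper faces. -/
def cellBoundary {n : ℕ} (σ : Set (Rn R n)) : Set (Rn R n) :=
  ⋃₀ {τ | IsFaceOf τ σ ∧ τ ≠ σ}

/-- The (open) interior `Int σ` of a cell. -/
def cellInterior {n : ℕ} (σ : Set (Rn R n)) : Set (Rn R n) :=
  σ \ cellBoundary σ

/-- A simplex in `R^n`: convex hull of affinely independent points. -/
def IsSimplex {n : ℕ} (s : Set (Rn R n)) : Prop :=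
  ∃ (k : ℕ) (v : Fin (k + 1) → Rn R n),
    AffineIndependent R v ∧ s = convexHull R (Set.range v)

/-- A compact polyhedron in `R^n`: a finite union of simplexes. -/
def IsCompactPolyhedron {n : ℕ} (P : Set (Rn R n)) : Prop :=
  ∃ l : List (Set (Rn R n)), (∀ s ∈ l, IsSimplex s) ∧ P = {x | ∃ s ∈ l, x ∈ s}

/-- The open simplex spanned by the affinely independent family `v`. -/
def SimplexInterior {n k : ℕ} (v : Fin (k + 1) → Rn R n) : Set (Rn R n) :=
  {x | ∃ w : Fin (k + 1) → R, (∀ i, 0 < w i) ∧ (∑ i, w i) = 1 ∧ x = ∑ i, w i • v i}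

/-- A finite cell complex in `R^n`. -/
def IsCellComplex {n : ℕ} (K : Set (Set (Rn R n))) : Prop :=
  K.Finite ∧ (∀ σ ∈ K, IsCell σ ∧ σ.Nonempty) ∧
    (∀ σ ∈ K, ∀ τ : Set (Rn R n), IsFaceOf τ σ → τ ∈ K) ∧
    (∀ σ ∈ K, ∀ τ ∈ K, (σ ∩ τ).Nonempty → IsFaceOf (σ ∩ τ) σ ∧ IsFaceOf (σ ∩ τ) τ)

/-- A finite simplicial complex in `R^n`. -/
def IsSimplicialComplex {n : ℕ} (K : Set (Set (Rn R n))) : Prop :=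
  IsCellComplex K ∧ ∀ σ ∈ K, IsSimplex σ

/-- The cone with vertex `v` and base `A`. -/
def coneSet {n : ℕ} (v : Rn R n) (A : Set (Rn R n)) : Set (Rn R n) :=
  convexHull R ({v} ∪ A)

/-- `K'` is a simplicial subdivision of `K`. -/
def IsSubdivisionOf {n : ℕ} (K' K : Set (Set (Rn R n))) : Prop :=
  IsSimplicialComplex K' ∧ ⋃₀ K' = ⋃₀ K ∧ ∀ τ ∈ K', ∃ σ ∈ K, τ ⊆ σ

/-- `K'` is a derived subdivision of `K`. -/
def IsDerivedSubdivisionOf {n : ℕ} (K' K : Set (Set (Rn R n))) : Prop :=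
  IsSubdivisionOf K' K ∧ ∀ σ ∈ K, ∃ v ∈ cellInterior σ,
    {τ ∈ K' | τ ⊆ σ} = {τ ∈ K' | τ ⊆ cellBoundary σ} ∪
      (coneSet v '' {τ ∈ K' | τ ⊆ cellBoundary σ}) ∪ {{v}}

/-- `v` is the barycenter of `σ` (the centroid of its extreme points). -/
def IsBarycenterOf {n : ℕ} (v : Rn R n) (σ : Set (Rn R n)) : Prop :=
  ∃ s : Finset (Rn R n), ↑s = Set.extremePoints R σ ∧ s.Nonempty ∧
    v = (s.card : R)⁻¹ • ∑ x ∈ s, x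

/-- `K'` is a barycentric subdivision of `K`. -/
def IsBarycentricSubdivisionOf {n : ℕ} (K' K : Set (Set (Rn R n))) : Prop :=
  IsSubdivisionOf K' K ∧ ∀ σ ∈ K, ∃ v, IsBarycenterOf v σ ∧ v ∈ cellInterior σ ∧
    {τ ∈ K' | τ ⊆ σ} = {τ ∈ K' | τ ⊆ cellBoundary σ} ∪
      (coneSet v '' {τ ∈ K' | τ ⊆ cellBoundary σ}) ∪ {{v}}

/-- The union of the stars `|st(v,K)|` over all vertices `v` of `K` lying in `W`. -/
def starNbhd {n : ℕ} (K : Set (Set (Rn R n))) (W : Set (Rn R n)) : Set (Rn R n) :=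
  {x | ∃ v σ, {v} ∈ K ∧ v ∈ W ∧ σ ∈ K ∧ v ∈ σ ∧ x ∈ σ}

/-- The graph of a two-parameter map `(x,t) ↦ F x t`, `t ∈ [0,1]`, `x ∈ X`,
as a subset of `R^(n+1+b)`. -/
def isotGraph {n b : ℕ} (F : Rn R n → R → Rn R b) (X : Set (Rn R n)) :
    Set (Rn R (n + 1 + b)) :=
  {z | ∃ x ∈ X, ∃ t ∈ Set.Icc (0 : R) 1, z = Fin.append (Fin.snoc x t) (F x t)}

/-- Open intervals of `R`, with possibly infinite endpoints. -/
def IsOpenIntervalSet (J : Set R) : Prop :=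
  (∃ a b : R, J = Set.Ioo a b) ∨ (∃ a : R, J = Set.Ioi a) ∨ (∃ b : R, J = Set.Iio b) ∨
    J = Set.univ

/-- A finite union of points and open intervals. -/
def IsPointsAndIntervals (A : Set R) : Prop :=
  ∃ (P : List R) (I : List (Set R)), (∀ J ∈ I, IsOpenIntervalSet J) ∧
    A = {x | x ∈ P ∨ ∃ J ∈ I, x ∈ J}

end LOF

/-- An o-minimal structure over an ordered field `R`, satisfying in addition the
strengthened axiom that every algebraic subset of `R^n` is definable. -/
structure OMinStructure (R : Type*) [Field R] [LinearOrder R] [IsStrictOrderedRing R] where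
  S : ∀ n : ℕ, Set (Set (Rn R n))
  union_mem : ∀ n, ∀ A ∈ S n, ∀ B ∈ S n, A ∪ B ∈ S n
  compl_mem : ∀ n, ∀ A ∈ S n, Aᶜ ∈ S n
  prod_left_mem : ∀ n, ∀ A ∈ S n, {z : Rn R (n + 1) | Fin.tail z ∈ A} ∈ S (n + 1)
  prod_right_mem : ∀ n, ∀ A ∈ S n, {z : Rn R (n + 1) | Fin.init z ∈ A} ∈ S (n + 1)
  linear_mem : ∀ n (V : Submodule R (Rn R n)), (V : Set (Rn R n)) ∈ S n
  alg_mem : ∀ n (l : List (MvPolynomial (Fin n) R)),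
    {x : Rn R n | ∀ p ∈ l, MvPolynomial.eval x p = 0} ∈ S n
  lt_mem : {z : Rn R 2 | z 0 < z 1} ∈ S 2
  proj_mem : ∀ n, ∀ A ∈ S (n + 1), (fun z : Rn R (n + 1) => Fin.init z) '' A ∈ S n
  omin : ∀ A ∈ S 1, IsPointsAndIntervals {x : R | (fun _ : Fin 1 => x) ∈ A}

section TopLOF

variable {R : Type*} [Field R] [LinearOrder R] [IsStrictOrderedRing R] [TopologicalSpace R] [OrderTopology R]

/-- A PL homeomorphism from `X` onto `Y`. -/
def IsPLHomeo {a b : ℕ} (f : Rn R a → Rn R b) (X : Set (Rn R a)) (Y : Set (Rn R b)) : Prop :=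
  IsHomeoOn f X Y ∧ IsCompactPolyhedron (mapGraph f X)

/-- A compact PL manifold: a compact polyhedron each point of which has a compact
polyhedral neighborhood PL homeomorphic to a `d`-simplex, with the point going to an
interior point of the simplex. -/
def IsCompactPLManifold {n : ℕ} (M : Set (Rn R n)) : Prop :=
  IsCompactPolyhedron M ∧ ∃ d : ℕ, ∀ x ∈ M,
    ∃ (U : Set (Rn R n)) (v : Fin (d + 1) → Rn R d) (f : Rn R n → Rn R d),
      IsCompactPolyhedron U ∧ U ⊆ M ∧ U ∈ 𝓝[M] x ∧ AffineIndependent R v ∧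
      IsPLHomeo f U (convexHull R (Set.range v)) ∧ f x ∈ SimplexInterior v

/-- A compact PL manifold with boundary: a compact polyhedron each point of which has a
compact polyhedral neighborhood PL homeomorphic to a `d`-simplex. -/
def IsCompactPLManifoldWithBoundary {n : ℕ} (M : Set (Rn R n)) : Prop :=
  IsCompactPolyhedron M ∧ ∃ d : ℕ, ∀ x ∈ M,
    ∃ (U : Set (Rn R n)) (v : Fin (d + 1) → Rn R d) (f : Rn R n → Rn R d),
      IsCompactPolyhedron U ∧ U ⊆ M ∧ U ∈ 𝓝[M] x ∧ AffineIndependent R v ∧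
      IsPLHomeo f U (convexHull R (Set.range v))

/-- The interior of a compact PL manifold with boundary: the set of points having a
chart onto a simplex sending the point to an interior point. -/
def PLManifoldInterior {n : ℕ} (M : Set (Rn R n)) : Set (Rn R n) :=
  {x ∈ M | ∃ (d : ℕ) (U : Set (Rn R n)) (v : Fin (d + 1) → Rn R d) (f : Rn R n → Rn R d),
    IsCompactPolyhedron U ∧ U ⊆ M ∧ U ∈ 𝓝[M] x ∧ AffineIndependent R v ∧
    IsPLHomeo f U (convexHull R (Set.range v)) ∧ f x ∈ SimplexInterior v}

/-- `φ` is a (semilinear) collar on `A` in `B`: a semilinear `C⁰` embedding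
`A × [0,1] → B` with `φ(·,0) = id` whose image of `A × [0,1)` is an open
neighborhood of `A` in `B`. -/
def IsCollarOn {n : ℕ} (φ : Rn R n → R → Rn R n) (A B : Set (Rn R n)) : Prop :=
  Set.MapsTo (fun p : Rn R n × R => φ p.1 p.2) (A ×ˢ Set.Icc (0 : R) 1) B ∧
  ContinuousOn (fun p : Rn R n × R => φ p.1 p.2) (A ×ˢ Set.Icc (0 : R) 1) ∧
  Set.InjOn (fun p : Rn R n × R => φ p.1 p.2) (A ×ˢ Set.Icc (0 : R) 1) ∧
  (∃ ψ : Rn R n → Rn R n × R,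
    ContinuousOn ψ ((fun p : Rn R n × R => φ p.1 p.2) '' (A ×ˢ Set.Icc (0 : R) 1)) ∧
    ∀ p ∈ A ×ˢ Set.Icc (0 : R) 1, ψ (φ p.1 p.2) = p) ∧
  (∀ x ∈ A, φ x 0 = x) ∧
  IsSemilinear (isotGraph φ A) ∧
  (∃ V : Set (Rn R n), IsOpen V ∧
    (fun p : Rn R n × R => φ p.1 p.2) '' (A ×ˢ Set.Ico (0 : R) 1) = V ∩ B)

/-- A standard semilinear set. -/
def IsStandardSemilinear {n : ℕ} (X : Set (Rn R n)) : Prop :=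
  IsSemilinear X ∧ IsBoundedSet X ∧
    ∃ φ : Rn R n → R → Rn R n, IsCollarOn φ (closure X \ X) (closure X)

/-- A standard family of semilinear sets `(X; X_1, ..., X_k)`. -/
def IsStandardFamily {n k : ℕ} (X : Set (Rn R n)) (Xi : Fin k → Set (Rn R n)) : Prop :=
  IsSemilinear X ∧ (∀ i, IsSemilinear (Xi i)) ∧ (∀ i, Xi i ⊆ X) ∧ IsBoundedSet X ∧
  ∃ φ : Rn R n → R → Rn R n, IsCollarOn φ (closure X \ X) (closure X) ∧
    ∀ i, ∃ X' : Set (Rn R n), IsSemilinear X' ∧ X' ⊆ closure X \ X ∧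
      ∀ x ∈ closure X \ X, ∀ t ∈ Set.Icc (0 : R) 1, (φ x t ∈ Xi i ↔ x ∈ X' ∧ 0 < t)

/-- A definable isotopy of `X`: a definable `C⁰` map `F : X × [0,1] → X` with
`F(·,0) = id` and each `F(·,t)` a homeomorphism of `X`. -/
def IsDefinableIsotopy (𝒮 : OMinStructure R) {n : ℕ}
    (F : Rn R n → R → Rn R n) (X : Set (Rn R n)) : Prop :=
  ContinuousOn (fun p : Rn R n × R => F p.1 p.2) (X ×ˢ Set.Icc (0 : R) 1) ∧
  (∀ x ∈ X, F x 0 = x) ∧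
  (∀ t ∈ Set.Icc (0 : R) 1, IsHomeoOn (fun x => F x t) X X) ∧
  isotGraph F X ∈ 𝒮.S (n + 1 + n)

/-- A definable `C⁰` manifold: a definable set with a definable atlas. -/
def IsDefinableManifold (𝒮 : OMinStructure R) {m : ℕ} (M : Set (Rn R m)) : Prop :=
  M ∈ 𝒮.S m ∧ ∃ d : ℕ, ∀ x ∈ M, ∃ (U : Set (Rn R m)) (ψ : Rn R m → Rn R d),
    x ∈ U ∧ (∃ V : Set (Rn R m), IsOpen V ∧ U = V ∩ M) ∧ U ∈ 𝒮.S m ∧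
    IsHomeoOn ψ U (ψ '' U) ∧ IsOpen (ψ '' U) ∧ mapGraph ψ U ∈ 𝒮.S (m + d)

/-- A cellular map between finite cell complexes: continuous on `|K|`, affine on
each cell and sending each cell of `K` onto a cell of `M`. -/
def IsCellularMap {a b : ℕ} (K : Set (Set (Rn R a))) (M : Set (Set (Rn R b)))
    (γ : Rn R a → Rn R b) : Prop :=
  ContinuousOn γ (⋃₀ K) ∧ Set.MapsTo γ (⋃₀ K) (⋃₀ M) ∧
    ∀ σ ∈ K, ∃ τ ∈ M, γ '' σ = τ ∧ ∃ g : Rn R a →ᵃ[R] Rn R b, Set.EqOn γ g σ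

end TopLOF

/-- A structure over `ℝ` closed under the boolean and projection operations,
containing linear subspaces and the order relation (no algebraic-sets axiom). -/
structure RealStructure where
  S : ∀ n : ℕ, Set (Set (Rn ℝ n))
  union_mem : ∀ n, ∀ A ∈ S n, ∀ B ∈ S n, A ∪ B ∈ S n
  compl_mem : ∀ n, ∀ A ∈ S n, Aᶜ ∈ S n
  prod_left_mem : ∀ n, ∀ A ∈ S n, {z : Rn ℝ (n + 1) | Fin.tail z ∈ A} ∈ S (n + 1)
  prod_right_mem : ∀ n, ∀ A ∈ S n, {z : Rn ℝ (n + 1) | Fin.init z ∈ A} ∈ S (n + 1)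
  linear_mem : ∀ n (V : Submodule ℝ (Rn ℝ n)), (V : Set (Rn ℝ n)) ∈ S n
  lt_mem : {z : Rn ℝ 2 | z 0 < z 1} ∈ S 2
  proj_mem : ∀ n, ∀ A ∈ S (n + 1), (fun z : Rn ℝ (n + 1) => Fin.init z) '' A ∈ S n

/-- A structure over `ℝ` which in addition contains every algebraic set. -/
structure RealStructureAlg extends RealStructure where
  alg_mem : ∀ n (l : List (MvPolynomial (Fin n) ℝ)),
    {x : Rn ℝ n | ∀ p ∈ l, MvPolynomial.eval x p = 0} ∈ S n

/-- `S_n(X)`: the smallest structure over `ℝ` containing `X`. -/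
def SFam {m : ℕ} (X : Set (Rn ℝ m)) (n : ℕ) : Set (Set (Rn ℝ n)) :=
  {A | ∀ 𝒮 : RealStructure, X ∈ 𝒮.S m → A ∈ 𝒮.S n}

/-- `S_n(X)`: the smallest structure over `ℝ` containing `X` and all algebraic sets. -/
def SFamAlg {m : ℕ} (X : Set (Rn ℝ m)) (n : ℕ) : Set (Set (Rn ℝ n)) :=
  {A | ∀ 𝒮 : RealStructureAlg, X ∈ 𝒮.S m → A ∈ 𝒮.S n}

/-- `A` has only finitely many connected components. -/
def HasFinitelyManyComponents {α : Type*} [TopologicalSpace α] (A : Set α) : Prop :=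
  {C : Set α | ∃ x ∈ A, C = connectedComponentIn A x}.Finite

/-- `X ⊆ ℝ^m` is tame (without the algebraic-sets axiom). -/
def IsTame {m : ℕ} (X : Set (Rn ℝ m)) : Prop :=
  ∀ A ∈ SFam X 1, HasFinitelyManyComponents A

/-- `X ⊆ ℝ^m` is tame (with the algebraic-sets axiom). -/
def IsTameAlg {m : ℕ} (X : Set (Rn ℝ m)) : Prop :=
  ∀ A ∈ SFamAlg X 1, HasFinitelyManyComponents A

/-- A structure over `ℝ` is o-minimal if every set in `S 1` is a finite union of
points and open intervals. -/
def IsOMinimalReal (𝒮 : RealStructure) : Prop :=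
  ∀ A ∈ 𝒮.S 1, IsPointsAndIntervals {x : ℝ | (fun _ : Fin 1 => x) ∈ A}

/-- A tame `C⁰` manifold: a tame set which is a topological manifold with a tame atlas. -/
def IsTameC0Manifold {m : ℕ} (X : Set (Rn ℝ m)) : Prop :=
  IsTameAlg X ∧ ∃ d : ℕ, ∀ x ∈ X, ∃ (U : Set (Rn ℝ m)) (ψ : Rn ℝ m → Rn ℝ d),
    x ∈ U ∧ (∃ V : Set (Rn ℝ m), IsOpen V ∧ U = V ∩ X) ∧
    IsHomeoOn ψ U (ψ '' U) ∧ IsOpen (ψ '' U) ∧ IsTameAlg (mapGraph ψ U)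

section AuxLemmas
variable {R : Type*} [Field R] [LinearOrder R] [IsStrictOrderedRing R] {n : ℕ}

namespace SLAux

theorem sl_empty : IsSemilinear (∅ : Set (Rn R n)) := by
  exact ⟨[], by simp, by simp⟩

theorem sl_of_basic {A : Set (Rn R n)} (h : IsSemilinearBasic A) : IsSemilinear A :=
  ⟨[A], by simpa using h, by simp⟩

theorem basic_univ : IsSemilinearBasic (univ : Set (Rn R n)) := ⟨[], [], by simp⟩

theorem sl_union {A B : Set (Rn R n)} (hA : IsSemilinear A) (hB : IsSemilinear B) :
    IsSemilinear (A ∪ B) := by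
  obtain ⟨la, hla, rfl⟩ := hA
  obtain ⟨lb, hlb, rfl⟩ := hB
  refine ⟨la ++ lb, ?_, ?_⟩
  · intro C hC; rcases List.mem_append.mp hC with h | h
    exacts [hla C h, hlb C h]
  · ext x; simp only [mem_union, mem_setOf_eq, List.mem_append]
    constructor
    · rintro (⟨C, hC, hx⟩ | ⟨C, hC, hx⟩) <;> exact ⟨C, by tauto, hx⟩
    · rintro ⟨C, hC | hC, hx⟩
      exacts [Or.inl ⟨C, hC, hx⟩, Or.inr ⟨C, hC, hx⟩]

theorem basic_inter {A B : Set (Rn R n)} (hA : IsSemilinearBasic A) (hB : IsSemilinearBasic B) :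
    IsSemilinearBasic (A ∩ B) := by
  obtain ⟨a0, a1, rfl⟩ := hA
  obtain ⟨b0, b1, rfl⟩ := hB
  refine ⟨a0 ++ b0, a1 ++ b1, ?_⟩
  ext x
  simp only [mem_inter_iff, mem_setOf_eq, List.mem_append]
  constructor
  · rintro ⟨⟨h1, h2⟩, h3, h4⟩
    exact ⟨fun f hf => hf.elim (h1 f) (h3 f), fun f hf => hf.elim (h2 f) (h4 f)⟩
  · rintro ⟨h1, h2⟩
    exact ⟨⟨fun f hf => h1 f (Or.inl hf), fun f hf => h2 f (Or.inl hf)⟩,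
      fun f hf => h1 f (Or.inr hf), fun f hf => h2 f (Or.inr hf)⟩

theorem sl_inter {A B : Set (Rn R n)} (hA : IsSemilinear A) (hB : IsSemilinear B) :
    IsSemilinear (A ∩ B) := by
  obtain ⟨la, hla, rfl⟩ := hA
  induction la with
  | nil => simpa using sl_empty
  | cons C t ih =>
    have : ({x | ∃ B ∈ C :: t, x ∈ B} : Set (Rn R n)) ∩ B
        = (C ∩ B) ∪ ({x | ∃ B ∈ t, x ∈ B} ∩ B) := by
      ext x; simp only [mem_inter_iff, mem_setOf_eq, List.mem_cons, mem_union]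
      constructor
      · rintro ⟨⟨D, (rfl | hD), hx⟩, hxB⟩
        exacts [Or.inl ⟨hx, hxB⟩, Or.inr ⟨⟨D, hD, hx⟩, hxB⟩]
      · rintro (⟨hx, hxB⟩ | ⟨⟨D, hD, hx⟩, hxB⟩)
        exacts [⟨⟨C, Or.inl rfl, hx⟩, hxB⟩, ⟨⟨D, Or.inr hD, hx⟩, hxB⟩]
    rw [this]
    obtain ⟨lb, hlb, hBeq⟩ := hB
    have hCB : IsSemilinear (C ∩ B) := by
      subst hBeq
      obtain ⟨lc, hlc, hceq⟩ : IsSemilinear ({x | ∃ B ∈ lb, x ∈ B} : Set (Rn R n)) :=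
        ⟨lb, hlb, rfl⟩
      refine ⟨lb.map (fun D => C ∩ D), ?_, ?_⟩
      · intro D hD
        obtain ⟨E, hE, rfl⟩ := List.mem_map.mp hD
        exact basic_inter (hla C (by simp)) (hlb E hE)
      · ext x
        simp only [mem_inter_iff, mem_setOf_eq, List.mem_map]
        constructor
        · rintro ⟨hxC, D, hD, hxD⟩; exact ⟨C ∩ D, ⟨D, hD, rfl⟩, hxC, hxD⟩
        · rintro ⟨E, ⟨D, hD, rfl⟩, hxC, hxD⟩; exact ⟨hxC, D, hD, hxD⟩
    exact sl_union hCB (ih (fun D hD => hla D (by simp [hD])))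

theorem sl_univ : IsSemilinear (univ : Set (Rn R n)) :=
  ⟨[univ], by rintro B hB; simp at hB; subst hB; exact ⟨[], [], by simp⟩, by simp⟩

theorem basic_pos (g : Rn R n →ᵃ[R] R) : IsSemilinearBasic {x : Rn R n | 0 < g x} :=
  ⟨[], [g], by ext x; simp⟩

theorem basic_neg (g : Rn R n →ᵃ[R] R) : IsSemilinearBasic {x : Rn R n | g x < 0} :=
  ⟨[], [-g], by ext x; simp⟩

theorem basic_zero (g : Rn R n →ᵃ[R] R) : IsSemilinearBasic {x : Rn R n | g x = 0} :=
  ⟨[g], [], by ext x; simp⟩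

theorem sl_ne (g : Rn R n →ᵃ[R] R) : IsSemilinear {x : Rn R n | g x ≠ 0} := by
  have : {x : Rn R n | g x ≠ 0} = {x | 0 < g x} ∪ {x | g x < 0} := by
    ext x; simp only [mem_setOf_eq, mem_union]
    constructor
    · intro h; rcases lt_or_gt_of_ne h with h | h
      exacts [Or.inr h, Or.inl h]
    · rintro (h | h) <;> intro hc <;> rw [hc] at h <;> exact lt_irrefl 0 h
  rw [this]
  exact sl_union (sl_of_basic (basic_pos g)) (sl_of_basic (basic_neg g))

theorem sl_nonpos (g : Rn R n →ᵃ[R] R) : IsSemilinear {x : Rn R n | ¬ 0 < g x} := by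
  have : {x : Rn R n | ¬ 0 < g x} = {x | g x = 0} ∪ {x | g x < 0} := by
    ext x; simp only [mem_setOf_eq, mem_union, not_lt]
    constructor
    · intro h; rcases lt_or_eq_of_le h with h | h
      exacts [Or.inr h, Or.inl h]
    · rintro (h | h)
      exacts [le_of_eq h, h.le]
  rw [this]
  exact sl_union (sl_of_basic (basic_zero g)) (sl_of_basic (basic_neg g))

theorem basic_compl {A : Set (Rn R n)} (h : IsSemilinearBasic A) : IsSemilinear Aᶜ := by
  obtain ⟨l0, l1, rfl⟩ := h
  induction l0 with
  | nil =>
    induction l1 with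
    | nil =>
      have he : ({x | (∀ f ∈ ([]:List (Rn R n →ᵃ[R] R)), f x = 0) ∧
          (∀ f ∈ ([]:List (Rn R n →ᵃ[R] R)), 0 < f x)} : Set (Rn R n))ᶜ = ∅ := by
        ext x; simp
      rw [he]; exact sl_empty
    | cons g t iht =>
      have he : ({x | (∀ f ∈ ([] : List (Rn R n →ᵃ[R] R)), f x = 0) ∧
          (∀ f ∈ g :: t, 0 < f x)} : Set (Rn R n))ᶜ
          = ({x | (∀ f ∈ ([] : List (Rn R n →ᵃ[R] R)), f x = 0) ∧ (∀ f ∈ t, 0 < f x)})ᶜ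
            ∪ {x | ¬ 0 < g x} := by
        ext x
        simp only [mem_compl_iff, mem_setOf_eq, mem_union, List.mem_cons, List.not_mem_nil,
          false_implies, implies_true, true_and]
        constructor
        · intro hn
          by_cases hg : 0 < g x
          · left; intro hc; exact hn (by rintro f (rfl | hf); exacts [hg, hc f hf])
          · right; exact hg
        · rintro (hn | hg) hc
          · exact hn (fun f hf => hc f (Or.inr hf))
          · exact hg (hc g (Or.inl rfl))
      rw [he]
      exact sl_union iht (sl_nonpos g)
  | cons g t iht =>
    have he : ({x | (∀ f ∈ g :: t, f x = 0) ∧ (∀ f ∈ l1, 0 < f x)} : Set (Rn R n))ᶜ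
        = ({x | (∀ f ∈ t, f x = 0) ∧ (∀ f ∈ l1, 0 < f x)})ᶜ ∪ {x | g x ≠ 0} := by
      ext x
      simp only [mem_compl_iff, mem_setOf_eq, mem_union, List.mem_cons]
      constructor
      · intro hn
        by_cases hg : g x = 0
        · left; rintro ⟨h1, h2⟩
          exact hn ⟨by rintro f (rfl | hf); exacts [hg, h1 f hf], h2⟩
        · right; exact hg
      · rintro (hn | hg) ⟨h1, h2⟩
        · exact hn ⟨fun f hf => h1 f (Or.inr hf), h2⟩
        · exact hg (h1 g (Or.inl rfl))
    rw [he]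
    exact sl_union iht (sl_ne g)

theorem sl_compl {A : Set (Rn R n)} (h : IsSemilinear A) : IsSemilinear Aᶜ := by
  obtain ⟨l, hl, rfl⟩ := h
  induction l with
  | nil =>
    have he : ({x | ∃ B ∈ ([]:List (Set (Rn R n))), x ∈ B} : Set (Rn R n))ᶜ = univ := by
      ext x; simp
    rw [he]; exact sl_univ
  | cons C t ih =>
    have he : ({x | ∃ B ∈ C :: t, x ∈ B} : Set (Rn R n))ᶜ
        = Cᶜ ∩ ({x | ∃ B ∈ t, x ∈ B} : Set (Rn R n))ᶜ := by
      ext x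
      simp only [mem_compl_iff, mem_setOf_eq, mem_inter_iff, List.mem_cons, not_exists]
      constructor
      · intro hn
        exact ⟨fun hx => hn C ⟨Or.inl rfl, hx⟩, fun B hB => hn B ⟨Or.inr hB.1, hB.2⟩⟩
      · rintro ⟨h1, h2⟩ B ⟨(rfl | hB), hx⟩
        exacts [h1 hx, h2 B ⟨hB, hx⟩]
    rw [he]
    exact sl_inter (basic_compl (hl C (by simp))) (ih (fun B hB => hl B (by simp [hB])))

theorem sl_diff {A B : Set (Rn R n)} (hA : IsSemilinear A) (hB : IsSemilinear B) :
    IsSemilinear (A \ B) := sl_inter hA (sl_compl hB)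

theorem sl_nonneg (g : Rn R n →ᵃ[R] R) : IsSemilinear {x : Rn R n | 0 ≤ g x} := by
  have : {x : Rn R n | 0 ≤ g x} = {x | 0 < g x} ∪ {x | g x = 0} := by
    ext x; simp only [mem_setOf_eq, mem_union]
    constructor
    · intro h; rcases lt_or_eq_of_le h with h | h
      exacts [Or.inl h, Or.inr h.symm]
    · rintro (h | h)
      exacts [h.le, le_of_eq h.symm]
  rw [this]
  exact sl_union (sl_of_basic (basic_pos g)) (sl_of_basic (basic_zero g))

theorem sl_weak (l0 l1 : List (Rn R n →ᵃ[R] R)) :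
    IsSemilinear {x | (∀ f ∈ l0, f x = 0) ∧ (∀ f ∈ l1, 0 ≤ f x)} := by
  induction l1 with
  | nil => exact sl_of_basic ⟨l0, [], by ext x; simp⟩
  | cons g t ih =>
    have he : ({x | (∀ f ∈ l0, f x = 0) ∧ (∀ f ∈ g :: t, 0 ≤ f x)} : Set (Rn R n))
        = {x | (∀ f ∈ l0, f x = 0) ∧ (∀ f ∈ t, 0 ≤ f x)} ∩ {x | 0 ≤ g x} := by
      ext x
      simp only [mem_setOf_eq, mem_inter_iff, List.mem_cons]
      constructor
      · rintro ⟨h1, h2⟩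
        exact ⟨⟨h1, fun f hf => h2 f (Or.inr hf)⟩, h2 g (Or.inl rfl)⟩
      · rintro ⟨⟨h1, h2⟩, hg⟩
        exact ⟨h1, by rintro f (rfl | hf); exacts [hg, h2 f hf]⟩
    rw [he]
    exact sl_inter ih (sl_nonneg g)

end SLAux

variable [TopologicalSpace R] [OrderTopology R]

open Filter

namespace SLAux

theorem aff_cont (f : Rn R n →ᵃ[R] R) : Continuous f := by
  rw [f.decomp]
  exact f.linear.continuous_on_pi.add continuous_const

theorem closed_weak (l0 l1 : List (Rn R n →ᵃ[R] R)) :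
    IsClosed {x : Rn R n | (∀ f ∈ l0, f x = 0) ∧ (∀ f ∈ l1, 0 ≤ f x)} := by
  have h0 : ∀ l : List (Rn R n →ᵃ[R] R), IsClosed {x : Rn R n | ∀ f ∈ l, f x = 0} := by
    intro l
    induction l with
    | nil => simpa using isClosed_univ
    | cons g t ih =>
      have he : {x : Rn R n | ∀ f ∈ g :: t, f x = 0}
          = g ⁻¹' {0} ∩ {x | ∀ f ∈ t, f x = 0} := by
        ext x; simp only [mem_setOf_eq, mem_inter_iff, mem_preimage, mem_singleton_iff,
          List.mem_cons]
        constructor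
        · intro h; exact ⟨h g (Or.inl rfl), fun f hf => h f (Or.inr hf)⟩
        · rintro ⟨h1, h2⟩ f (rfl | hf); exacts [h1, h2 f hf]
      rw [he]
      exact (isClosed_singleton.preimage (aff_cont g)).inter ih
  have h1 : ∀ l : List (Rn R n →ᵃ[R] R), IsClosed {x : Rn R n | ∀ f ∈ l, 0 ≤ f x} := by
    intro l
    induction l with
    | nil => simpa using isClosed_univ
    | cons g t ih =>
      have he : {x : Rn R n | ∀ f ∈ g :: t, 0 ≤ f x}
          = g ⁻¹' (Ici 0) ∩ {x | ∀ f ∈ t, 0 ≤ f x} := by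
        ext x; simp only [mem_setOf_eq, mem_inter_iff, mem_preimage, mem_Ici, List.mem_cons]
        constructor
        · intro h; exact ⟨h g (Or.inl rfl), fun f hf => h f (Or.inr hf)⟩
        · rintro ⟨h1, h2⟩ f (rfl | hf); exacts [h1, h2 f hf]
      rw [he]
      exact (isClosed_Ici.preimage (aff_cont g)).inter ih
  have he : {x : Rn R n | (∀ f ∈ l0, f x = 0) ∧ (∀ f ∈ l1, 0 ≤ f x)}
      = {x | ∀ f ∈ l0, f x = 0} ∩ {x | ∀ f ∈ l1, 0 ≤ f x} := rfl
  rw [he]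
  exact (h0 l0).inter (h1 l1)

theorem closure_basic {A : Set (Rn R n)} (h : IsSemilinearBasic A) :
    IsSemilinear (closure A) := by
  obtain ⟨l0, l1, rfl⟩ := h
  by_cases hne : ({x : Rn R n | (∀ f ∈ l0, f x = 0) ∧ (∀ f ∈ l1, 0 < f x)}).Nonempty
  · obtain ⟨c, hc0, hc1⟩ := hne
    have he : closure {x : Rn R n | (∀ f ∈ l0, f x = 0) ∧ (∀ f ∈ l1, 0 < f x)}
        = {x | (∀ f ∈ l0, f x = 0) ∧ (∀ f ∈ l1, 0 ≤ f x)} := by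
      apply Subset.antisymm
      · exact closure_minimal (fun x ⟨h1, h2⟩ => ⟨h1, fun f hf => (h2 f hf).le⟩)
          (closed_weak l0 l1)
      · rintro x ⟨h1, h2⟩
        have hγ : Tendsto (fun t : R => AffineMap.lineMap x c t) (𝓝[>] (0:R)) (𝓝 x) := by
          have hcont : Continuous (fun t : R => AffineMap.lineMap x c t) := by
            simp only [AffineMap.lineMap_apply_module]
            continuity
          have := (hcont.tendsto 0).mono_left (nhdsWithin_le_nhds (s := Ioi (0:R)))
          simpa using this
        refine mem_closure_of_tendsto hγ ?_
        filter_upwards [Ioc_mem_nhdsGT_of_mem (show (0:R) ∈ Ico (0:R) 1 by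
          exact ⟨le_refl 0, zero_lt_one⟩)] with t ht
        refine ⟨fun f hf => ?_, fun f hf => ?_⟩
        · rw [AffineMap.apply_lineMap, AffineMap.lineMap_apply_module, h1 f hf, hc0 f hf]
          simp
        · rw [AffineMap.apply_lineMap, AffineMap.lineMap_apply_module]
          have h2' := h2 f hf
          have hc' := hc1 f hf
          simp only [smul_eq_mul]
          nlinarith [ht.1, ht.2]
    rw [he]
    exact sl_weak l0 l1
  · rw [not_nonempty_iff_eq_empty.mp hne, closure_empty]
    exact sl_empty

theorem closure_sl {A : Set (Rn R n)} (h : IsSemilinear A) : IsSemilinear (closure A) := by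
  obtain ⟨l, hl, rfl⟩ := h
  induction l with
  | nil =>
    have : ({x : Rn R n | ∃ B ∈ ([] : List (Set (Rn R n))), x ∈ B}) = ∅ := by ext x; simp
    rw [this, closure_empty]; exact sl_empty
  | cons C t ih =>
    have he : ({x : Rn R n | ∃ B ∈ C :: t, x ∈ B}) = C ∪ {x | ∃ B ∈ t, x ∈ B} := by
      ext x; simp only [mem_setOf_eq, mem_union, List.mem_cons]
      constructor
      · rintro ⟨B, (rfl | hB), hx⟩; exacts [Or.inl hx, Or.inr ⟨B, hB, hx⟩]
      · rintro (hx | ⟨B, hB, hx⟩); exacts [⟨C, Or.inl rfl, hx⟩, ⟨B, Or.inr hB, hx⟩]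
    rw [he, closure_union]
    exact sl_union (closure_basic (hl C (by simp))) (ih (fun B hB => hl B (by simp [hB])))

theorem bounded_mono {A B : Set (Rn R n)} (hAB : A ⊆ B) (hB : IsBoundedSet B) :
    IsBoundedSet A := by
  obtain ⟨c, hc⟩ := hB
  exact ⟨c, fun x hx => hc x (hAB hx)⟩

theorem bounded_closure {A : Set (Rn R n)} (hA : IsBoundedSet A) :
    IsBoundedSet (closure A) := by
  obtain ⟨c, hc⟩ := hA
  refine ⟨c, fun x hx i => ?_⟩
  have hclosed : IsClosed {x : Rn R n | ∀ i, x i ∈ Icc (-c) c} := by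
    have : {x : Rn R n | ∀ i, x i ∈ Icc (-c) c} = ⋂ i, (fun x : Rn R n => x i) ⁻¹' Icc (-c) c := by
      ext x; simp
    rw [this]
    exact isClosed_iInter (fun i => isClosed_Icc.preimage (continuous_apply i))
  have hsub : closure A ⊆ {x : Rn R n | ∀ i, x i ∈ Icc (-c) c} :=
    closure_minimal (fun x hx i => abs_le.mp (hc x hx i)) hclosed
  exact abs_le.mpr (hsub hx i)


theorem collar_empty {B : Set (Rn R n)} :
    IsCollarOn (fun (x : Rn R n) (_ : R) => x) (∅ : Set (Rn R n)) B := by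
  refine ⟨?_, ?_, ?_, ⟨fun y => (y, 0), ?_, ?_⟩, fun x _ => rfl, ?_, ∅, isOpen_empty, ?_⟩
  · rintro p ⟨hp, -⟩; exact absurd hp (notMem_empty _)
  · rw [Set.empty_prod]; exact continuousOn_empty _
  · rw [Set.empty_prod]; exact Set.injOn_empty _
  · rw [Set.empty_prod, Set.image_empty]; exact continuousOn_empty _
  · rintro p ⟨hp, -⟩; exact absurd hp (notMem_empty _)
  · have he : isotGraph (fun (x : Rn R n) (_ : R) => x) (∅ : Set (Rn R n)) = ∅ := by
      ext z; simp [isotGraph]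
    rw [he]; exact sl_empty
  · rw [Set.empty_prod, Set.image_empty]; exact (Set.empty_inter B).symm

theorem standard_of_closed {X : Set (Rn R n)} (hsl : IsSemilinear X)
    (hb : IsBoundedSet X) (hc : IsClosed X) : IsStandardSemilinear X := by
  refine ⟨hsl, hb, fun x _ => x, ?_⟩
  rw [hc.closure_eq, diff_self]
  exact collar_empty

theorem standard_empty : IsStandardSemilinear (∅ : Set (Rn R n)) :=
  standard_of_closed sl_empty ⟨0, by simp⟩ isClosed_empty

theorem collar_closed {A B : Set (Rn R n)} {φ : Rn R n → R → Rn R n}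
    (h : IsCollarOn φ A B) (hB : IsClosed B) : IsClosed (closure A \ A) := by
  obtain ⟨hmaps, hcont, hinj, ⟨ψ, hψc, hψ⟩, hid, hsemi, V, hVopen, hVeq⟩ := h
  set S := (fun p : Rn R n × R => φ p.1 p.2) '' (A ×ˢ Icc (0:R) 1) with hS
  have hAB : A ⊆ B := fun a ha =>
    (hid a ha) ▸ hmaps (show (a, (0:R)) ∈ A ×ˢ Icc (0:R) 1 from ⟨ha, le_refl 0, zero_le_one⟩)
  have hAS : A ⊆ S := fun a ha => ⟨(a, 0), ⟨ha, le_refl 0, zero_le_one⟩, hid a ha⟩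
  have hAV : A ⊆ V := by
    intro a ha
    have hmem : φ a 0 ∈ (fun p : Rn R n × R => φ p.1 p.2) '' (A ×ˢ Ico (0:R) 1) :=
      ⟨(a, 0), ⟨ha, le_refl 0, zero_lt_one⟩, rfl⟩
    rw [hVeq] at hmem
    rw [← hid a ha]; exact hmem.1
  have hclAB : closure A ⊆ B := closure_minimal hAB hB
  have key : ∀ w, w ∈ closure A → w ∈ V → w ∈ A := by
    intro w hwcl hwV
    have hwB : w ∈ B := hclAB hwcl
    have hwim : w ∈ (fun p : Rn R n × R => φ p.1 p.2) '' (A ×ˢ Ico (0:R) 1) := by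
      rw [hVeq]; exact ⟨hwV, hwB⟩
    obtain ⟨p, hp, hpw⟩ := hwim
    have hpIcc : p ∈ A ×ˢ Icc (0:R) 1 := ⟨hp.1, hp.2.1, hp.2.2.le⟩
    have hwS : w ∈ S := ⟨p, hpIcc, hpw⟩
    have hne : (𝓝[A] w).NeBot := mem_closure_iff_nhdsWithin_neBot.mp hwcl
    have hcw : Filter.Tendsto ψ (𝓝[A] w) (𝓝 (ψ w)) := (hψc w hwS).mono hAS
    have heq : ∀ a ∈ A, ψ a = (a, (0:R)) := by
      intro a ha
      have h' := hψ (a, 0) ⟨ha, le_refl 0, zero_le_one⟩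
      rwa [hid a ha] at h'
    have t1 : Filter.Tendsto (fun a : Rn R n => (a, (0:R))) (𝓝[A] w) (𝓝 (ψ w)) :=
      hcw.congr' (by filter_upwards [self_mem_nhdsWithin] with a ha using heq a ha)
    have t2 : Filter.Tendsto (fun a : Rn R n => (a, (0:R))) (𝓝[A] w) (𝓝 (w, (0:R))) :=
      (tendsto_id.mono_left nhdsWithin_le_nhds).prodMk_nhds tendsto_const_nhds
    have huniq : ψ w = (w, 0) := tendsto_nhds_unique t1 t2
    have hψw : ψ w = p := by rw [← hpw]; exact hψ p hpIcc
    have hpw0 : p = (w, 0) := by rw [← hψw, huniq]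
    have hp1 : p.1 = w := by rw [hpw0]
    rw [← hp1]; exact hp.1
  refine isClosed_of_closure_subset ?_
  intro y hy
  have hycl : y ∈ closure A := by
    have h' := closure_mono (diff_subset : closure A \ A ⊆ closure A) hy
    rwa [closure_closure] at h'
  refine ⟨hycl, ?_⟩
  intro hyA
  rw [mem_closure_iff] at hy
  obtain ⟨z, hz1, hz2⟩ := hy V hVopen (hAV hyA)
  exact hz2.2 (key z hz2.1 hz1)

end SLAux
end AuxLemmas

theorem statement_12 {R : Type*} [Field R] [LinearOrder R] [IsStrictOrderedRing R] [TopologicalSpace R] [OrderTopology R]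
    {n : ℕ} (X : Set (Rn R n)) (hX : IsStandardSemilinear X)
    (Xs : ℕ → Set (Rn R n)) (h0 : Xs 0 = X)
    (hrec : ∀ j, Xs (j + 1) = closure (Xs j) \ Xs j) :
    ∀ j : ℕ,
      (closure (Xs j) = Xs j ∪ Xs (j + 1) ∧ Disjoint (Xs j) (Xs (j + 1))) ∧
      Xs (j + 2) ⊆ Xs j ∧
      Xs j \ Xs (j + 2) = {x ∈ Xs j | Xs j ∈ 𝓝[closure (Xs j)] x} ∧
      IsStandardSemilinear (Xs (2 * j)) := by
  classical
  open SLAux in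
  have habc : ∀ j : ℕ,
      (closure (Xs j) = Xs j ∪ Xs (j + 1) ∧ Disjoint (Xs j) (Xs (j + 1))) ∧
      Xs (j + 2) ⊆ Xs j ∧
      Xs j \ Xs (j + 2) = {x ∈ Xs j | Xs j ∈ 𝓝[closure (Xs j)] x} := by
    intro j
    have hAj : Xs (j + 1) = closure (Xs j) \ Xs j := hrec j
    have hXj2 : Xs (j + 2) = closure (Xs (j + 1)) \ Xs (j + 1) := hrec (j + 1)
    refine ⟨⟨?_, ?_⟩, ?_, ?_⟩
    · rw [hAj, Set.union_diff_cancel subset_closure]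
    · rw [hAj]; exact disjoint_sdiff_right
    · intro z hz
      rw [hXj2, hAj] at hz
      obtain ⟨hz1, hz2⟩ := hz
      have hzc : z ∈ closure (Xs j) := by
        have h' := closure_mono (diff_subset : closure (Xs j) \ Xs j ⊆ closure (Xs j)) hz1
        rwa [closure_closure] at h'
      by_contra hzj
      exact hz2 ⟨hzc, hzj⟩
    · ext x
      simp only [Set.mem_diff, Set.mem_sep_iff]
      constructor
      · rintro ⟨hxj, hx2⟩
        refine ⟨hxj, ?_⟩
        have hxA : x ∉ Xs (j + 1) := by rw [hAj]; exact fun h => h.2 hxj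
        have hxcl : x ∉ closure (Xs (j + 1)) := by
          intro hcl; exact hx2 (by rw [hXj2]; exact ⟨hcl, hxA⟩)
        rw [mem_nhdsWithin]
        refine ⟨(closure (Xs (j + 1)))ᶜ, isClosed_closure.isOpen_compl, hxcl, ?_⟩
        rintro y ⟨hy1, hy2⟩
        by_contra hy
        exact hy1 (subset_closure (by rw [hAj]; exact ⟨hy2, hy⟩))
      · rintro ⟨hxj, hnb⟩
        refine ⟨hxj, ?_⟩
        rw [hXj2]
        rintro ⟨hcl, hnA⟩
        rw [mem_nhdsWithin] at hnb
        obtain ⟨u, hu, hxu, hsub⟩ := hnb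
        rw [mem_closure_iff] at hcl
        obtain ⟨z, hz1, hz2⟩ := hcl u hu hxu
        rw [hAj] at hz2
        exact hz2.2 (hsub ⟨hz1, hz2.1⟩)
  obtain ⟨hslX, hbdX, φ, hφ⟩ := hX
  have hA1 : Xs 1 = closure X \ X := by rw [show (1:ℕ) = 0 + 1 from rfl, hrec 0, h0]
  have hsl1 : IsSemilinear (Xs 1) := by
    rw [hA1]; exact sl_diff (closure_sl hslX) hslX
  have hbd1 : IsBoundedSet (Xs 1) := by
    rw [hA1]; exact bounded_mono diff_subset (bounded_closure hbdX)
  have h2eq : Xs 2 = closure (Xs 1) \ Xs 1 := hrec 1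
  have hsl2 : IsSemilinear (Xs 2) := by
    rw [h2eq]; exact sl_diff (closure_sl hsl1) hsl1
  have hbd2 : IsBoundedSet (Xs 2) := by
    rw [h2eq]; exact bounded_mono diff_subset (bounded_closure hbd1)
  have h2closed : IsClosed (Xs 2) := by
    rw [h2eq, hA1]
    exact collar_closed hφ isClosed_closure
  have hstd2 : IsStandardSemilinear (Xs 2) := standard_of_closed hsl2 hbd2 h2closed
  have hempty : ∀ k : ℕ, Xs (k + 3) = ∅ := by
    intro k
    induction k with
    | zero =>
      show Xs 3 = ∅
      rw [show (3:ℕ) = 2 + 1 from rfl, hrec 2, h2closed.closure_eq, diff_self]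
    | succ m ih =>
      rw [show m + 1 + 3 = (m + 3) + 1 from rfl, hrec (m + 3), ih, closure_empty, diff_self]
  intro j
  refine ⟨(habc j).1, (habc j).2.1, (habc j).2.2, ?_⟩
  match j with
  | 0 => rw [show 2 * 0 = 0 from rfl, h0]; exact ⟨hslX, hbdX, φ, hφ⟩
  | 1 => rw [show 2 * 1 = 2 from rfl]; exact hstd2
  | (m + 2) =>
    rw [show 2 * (m + 2) = (2 * m + 1) + 3 by ring, hempty (2 * m + 1)]
    exact standard_empty
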